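/- Let y ∈ Y = closure(Φ(X)) be such that y is neither forward-asymptotic nor backward-asymptotic to the all-β fixed point (i.e., for all i > 0 the right tail (y)_i^∞ ≠ β^∞ and for all j < 0 the left tail (y)_{-∞}^j ≠ β^∞). Then y ∈ Φ(X). -/

import Mathlib

open MeasureTheory Filter Topology
open scoped ENNReal

/-- The odometer map on `X = {0,1}^ℕ` (adding one with carry in binary). -/
def Tod (x : ℕ → Bool) : ℕ → Bool := fun k =>
  if ∀ i < k, x i = true then !(x k) else x k

/-- The inverse of the odometer map (subtracting one with borrow). -/
def TodInv (x : ℕ → Bool) : ℕ → Bool := fun k =>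
  if ∀ i < k, x i = false then !(x k) else x k

/-- The number determined by the first `k` binary digits of `x`. -/
def DN (k : ℕ) (x : ℕ → Bool) : ℕ := ∑ i ∈ Finset.range k, 2 ^ i * (x i).toNat

/-- The cylinder `[0^i]` of sequences starting with `i` zeros. -/
def cyl0 (i : ℕ) : Set (ℕ → Bool) := {x | ∀ j < i, x j = false}

/-- `A = ⋃_{i=5}^∞ ⋃_{j=0}^{i-1} T^j([0^i])`. -/
def Aset : Set (ℕ → Bool) := ⋃ (i : ℕ) (_ : 5 ≤ i) (j : ℕ) (_ : j < i), Tod^[j] '' cyl0 i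

/-- `A_k = ⋃_{i=5}^{k} ⋃_{j=0}^{i-1} T^j([0^i])`. -/
def Ak (k : ℕ) : Set (ℕ → Bool) :=
  ⋃ (i : ℕ) (_ : 5 ≤ i) (_ : i ≤ k) (j : ℕ) (_ : j < i), Tod^[j] '' cyl0 i

/-- `E_k = ⋃_{i=k+1}^∞ ⋃_{j=0}^{i-1} T^j([0^i])`. -/
def Ek (k : ℕ) : Set (ℕ → Bool) :=
  ⋃ (i : ℕ) (_ : k + 1 ≤ i) (j : ℕ) (_ : j < i), Tod^[j] '' cyl0 i

/-- `T^n` for `n : ℤ` (using the inverse odometer for negative `n`). -/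
def zIter (n : ℤ) (x : ℕ → Bool) : ℕ → Bool :=
  if 0 ≤ n then Tod^[n.toNat] x else TodInv^[(-n).toNat] x

/-- The factor map `Φ : X → Z = {α,β}^ℤ`, with `β = true`, `α = false`:
`Φ(x)_n = β` iff `T^n(x) ∈ A`. -/
noncomputable def Phi (x : ℕ → Bool) : ℤ → Bool := fun n =>
  @decide (zIter n x ∈ Aset) (Classical.propDecidable _)

/-- The subshift `Y`, the closure of `Φ(X)` in the full two-sided shift. -/
def Ysub : Set (ℤ → Bool) := closure (Set.range Phi)

/-- The shift map on `Z = {α,β}^ℤ`. -/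
def shiftZ (z : ℤ → Bool) : ℤ → Bool := fun n => z (n + 1)

/-- The cylinder in `Z` given by a word `w` of length `n` placed at positions `0,…,n-1`. -/
def cylZ (n : ℕ) (w : Fin n → Bool) : Set (ℤ → Bool) :=
  {z | ∀ i : Fin n, z ((i : ℕ) : ℤ) = w i}

lemma DN_succ (i : ℕ) (x : ℕ → Bool) : DN (i+1) x = DN i x + 2^i * (x i).toNat := by
  simp [DN, Finset.sum_range_succ]

lemma DN_lt (i : ℕ) (x : ℕ → Bool) : DN i x < 2^i := by
  induction i with
  | zero => simp [DN]
  | succ i ih =>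
    rw [DN_succ]
    have : (x i).toNat ≤ 1 := Bool.toNat_le _
    have : 2^(i+1) = 2^i + 2^i := by ring
    nlinarith [Bool.toNat_le (x i)]

lemma DN_all_true {i : ℕ} {x : ℕ → Bool} (h : ∀ j < i, x j = true) : DN i x = 2^i - 1 := by
  induction i with
  | zero => simp [DN]
  | succ i ih =>
    rw [DN_succ, ih (fun j hj => h j (Nat.lt_succ_of_lt hj)), h i (Nat.lt_succ_self i)]
    have := Nat.one_le_two_pow (n := i)
    simp; omega

lemma DN_eq_zero_iff {i : ℕ} {x : ℕ → Bool} : DN i x = 0 ↔ ∀ j < i, x j = false := by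
  constructor
  · intro h j hj
    by_contra hc
    have hx : x j = true := by revert hc; cases x j <;> simp
    have : 2^j * (x j).toNat ≤ DN i x := Finset.single_le_sum (f := fun j => 2^j*(x j).toNat)
      (fun _ _ => Nat.zero_le _) (Finset.mem_range.mpr hj)
    rw [hx] at this
    have h2 := Nat.one_le_two_pow (n := j)
    simp only [Bool.toNat_true, mul_one] at this
    omega
  · intro h
    unfold DN
    apply Finset.sum_eq_zero
    intro j hj
    rw [h j (Finset.mem_range.mp hj)]
    simp

lemma DN_lt_of_not_all {i : ℕ} {x : ℕ → Bool} (h : ¬ ∀ j < i, x j = true) :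
    DN i x < 2^i - 1 := by
  induction i with
  | zero => simp at h
  | succ i ih =>
    rw [DN_succ]
    by_cases hi : ∀ j < i, x j = true
    · have hxi : x i = false := by
        by_contra hc
        exact h (fun j hj => by rcases Nat.lt_succ_iff_lt_or_eq.mp hj with h1|h1
                                · exact hi j h1
                                · subst h1; revert hc; cases x j <;> simp)
      rw [hxi]
      have h1 := DN_lt i x
      have : (2:ℕ)^(i+1) = 2^i + 2^i := by ring
      have := Nat.one_le_two_pow (n := i)
      simp; omega
    · have h1 := ih hi
      have h2 : (2:ℕ)^(i+1) = 2^i + 2^i := by ring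
      have h3 := Nat.one_le_two_pow (n := i)
      cases hxi : x i <;> simp <;> omega

lemma DN_pos_of_not_all_false {i : ℕ} {x : ℕ → Bool} (h : ¬ ∀ j < i, x j = false) :
    1 ≤ DN i x := by
  rcases Nat.eq_zero_or_pos (DN i x) with h0 | h0
  · exact absurd (DN_eq_zero_iff.mp h0) h
  · exact h0

lemma Tod_apply_of_all (x : ℕ → Bool) {k : ℕ} (h : ∀ i < k, x i = true) :
    Tod x k = !(x k) := by simp only [Tod]; rw [if_pos h]

lemma Tod_apply_of_not (x : ℕ → Bool) {k : ℕ} (h : ¬ ∀ i < k, x i = true) :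
    Tod x k = x k := by simp only [Tod]; rw [if_neg h]

lemma TodInv_apply_of_all (x : ℕ → Bool) {k : ℕ} (h : ∀ i < k, x i = false) :
    TodInv x k = !(x k) := by simp only [TodInv]; rw [if_pos h]

lemma TodInv_apply_of_not (x : ℕ → Bool) {k : ℕ} (h : ¬ ∀ i < k, x i = false) :
    TodInv x k = x k := by simp only [TodInv]; rw [if_neg h]

lemma DN_Tod (i : ℕ) (x : ℕ → Bool) : DN i (Tod x) = (DN i x + 1) % 2^i := by
  induction i with
  | zero => simp [DN]
  | succ i ih =>
    have h1 := Nat.one_le_two_pow (n := i)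
    have h2 : (2:ℕ)^(i+1) = 2^i + 2^i := by ring
    rw [DN_succ, DN_succ, ih]
    by_cases h : ∀ j < i, x j = true
    · rw [Tod_apply_of_all x h, DN_all_true h]
      cases hxi : x i
      · simp only [Bool.not_false, Bool.toNat_false, Bool.toNat_true, mul_zero, mul_one,
          add_zero]
        rw [show 2^i - 1 + 1 = 2^i from by omega, Nat.mod_self,
          Nat.mod_eq_of_lt (show (2:ℕ)^i < 2^(i+1) from by omega)]
        omega
      · simp only [Bool.not_true, Bool.toNat_false, Bool.toNat_true, mul_zero, mul_one,
          add_zero]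
        rw [show 2^i - 1 + 1 = 2^i from by omega, Nat.mod_self,
          show 2^i - 1 + 2^i + 1 = 2^(i+1) from by omega, Nat.mod_self]
    · have hDN := DN_lt_of_not_all h
      rw [Tod_apply_of_not x h,
        Nat.mod_eq_of_lt (show DN i x + 1 < 2^i from by omega)]
      cases hxi : x i
      · simp only [Bool.toNat_false, mul_zero, add_zero]
        rw [Nat.mod_eq_of_lt (show DN i x + 1 < 2^(i+1) from by omega)]
      · simp only [Bool.toNat_true, mul_one]
        rw [Nat.mod_eq_of_lt (show DN i x + 2^i + 1 < 2^(i+1) from by omega)]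
        omega

lemma DN_TodInv (i : ℕ) (x : ℕ → Bool) : DN i (TodInv x) = (DN i x + (2^i - 1)) % 2^i := by
  induction i with
  | zero => simp [DN]
  | succ i ih =>
    have h1 := Nat.one_le_two_pow (n := i)
    have h2 : (2:ℕ)^(i+1) = 2^i + 2^i := by ring
    rw [DN_succ, DN_succ, ih]
    by_cases h : ∀ j < i, x j = false
    · rw [TodInv_apply_of_all x h, DN_eq_zero_iff.mpr h]
      cases hxi : x i
      · simp only [Bool.not_false, Bool.toNat_false, Bool.toNat_true, mul_zero, mul_one,
          add_zero, zero_add]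
        rw [Nat.mod_eq_of_lt (show (2:ℕ)^i - 1 < 2^i from by omega),
          Nat.mod_eq_of_lt (show (2:ℕ)^(i+1) - 1 < 2^(i+1) from by omega)]
        omega
      · simp only [Bool.not_true, Bool.toNat_false, Bool.toNat_true, mul_zero, mul_one,
          add_zero, zero_add]
        rw [Nat.mod_eq_of_lt (show (2:ℕ)^i - 1 < 2^i from by omega),
          show 2^i + (2^(i+1) - 1) = (2^i - 1) + 1 * 2^(i+1) from by omega,
          Nat.add_mul_mod_self_right,
          Nat.mod_eq_of_lt (show (2:ℕ)^i - 1 < 2^(i+1) from by omega)]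
    · have hDN := DN_pos_of_not_all_false h
      have hDN2 := DN_lt i x
      rw [TodInv_apply_of_not x h,
        show DN i x + (2^i - 1) = (DN i x - 1) + 1 * 2^i from by omega,
        Nat.add_mul_mod_self_right,
        Nat.mod_eq_of_lt (show DN i x - 1 < 2^i from by omega)]
      cases hxi : x i
      · simp only [Bool.toNat_false, mul_zero, add_zero]
        rw [show DN i x + (2^(i+1) - 1) = (DN i x - 1) + 1 * 2^(i+1) from by omega,
          Nat.add_mul_mod_self_right,
          Nat.mod_eq_of_lt (show DN i x - 1 < 2^(i+1) from by omega)]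
      · simp only [Bool.toNat_true, mul_one]
        rw [show DN i x + 2^i + (2^(i+1) - 1) = (DN i x + 2^i - 1) + 1 * 2^(i+1) from by omega,
          Nat.add_mul_mod_self_right,
          Nat.mod_eq_of_lt (show DN i x + 2^i - 1 < 2^(i+1) from by omega)]
        omega

lemma tod_todInv (x : ℕ → Bool) : Tod (TodInv x) = x := by
  classical
  funext k
  by_cases h : ∀ i < k, x i = false
  · have hall : ∀ i < k, TodInv x i = true := by
      intro i hi
      rw [TodInv_apply_of_all x (fun j hj => h j (hj.trans hi)), h i hi]
      rfl
    rw [Tod_apply_of_all _ hall, TodInv_apply_of_all x h, Bool.not_not]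
  · have hex : ∃ i, x i = true ∧ i < k := by
      push_neg at h
      obtain ⟨i, hi, hxi⟩ := h
      exact ⟨i, by revert hxi; cases x i <;> simp, hi⟩
    set i0 := Nat.find hex with hi0
    obtain ⟨hx0, hk0⟩ := Nat.find_spec hex
    have hmin : ∀ j < i0, x j = false := by
      intro j hj
      have := Nat.find_min hex hj
      push_neg at this
      rcases Bool.eq_false_or_eq_true (x j) with h' | h'
      · exact absurd (hj.trans hk0) (by simpa using this h')
      · exact h'
    have hnot : ¬ ∀ i < k, TodInv x i = true := by
      push_neg
      refine ⟨i0, hk0, ?_⟩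
      rw [TodInv_apply_of_all x hmin, hx0]
      simp
    rw [Tod_apply_of_not _ hnot, TodInv_apply_of_not x h]

lemma todInv_tod (x : ℕ → Bool) : TodInv (Tod x) = x := by
  classical
  funext k
  by_cases h : ∀ i < k, x i = true
  · have hall : ∀ i < k, Tod x i = false := by
      intro i hi
      rw [Tod_apply_of_all x (fun j hj => h j (hj.trans hi)), h i hi]
      rfl
    rw [TodInv_apply_of_all _ hall, Tod_apply_of_all x h, Bool.not_not]
  · have hex : ∃ i, x i = false ∧ i < k := by
      push_neg at h
      obtain ⟨i, hi, hxi⟩ := h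
      exact ⟨i, by revert hxi; cases x i <;> simp, hi⟩
    set i0 := Nat.find hex with hi0
    obtain ⟨hx0, hk0⟩ := Nat.find_spec hex
    have hmin : ∀ j < i0, x j = true := by
      intro j hj
      have := Nat.find_min hex hj
      push_neg at this
      rcases Bool.eq_false_or_eq_true (x j) with h' | h'
      · exact h'
      · exact absurd (hj.trans hk0) (by simpa using this h')
    have hnot : ¬ ∀ i < k, Tod x i = false := by
      push_neg
      refine ⟨i0, hk0, ?_⟩
      rw [Tod_apply_of_all x hmin, hx0]
      simp
    rw [TodInv_apply_of_not _ hnot, Tod_apply_of_not x h]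

lemma tod_leftInverse : Function.LeftInverse Tod TodInv := tod_todInv
lemma todInv_leftInverse : Function.LeftInverse TodInv Tod := todInv_tod

lemma DN_Tod_iterate (i k : ℕ) (x : ℕ → Bool) :
    DN i (Tod^[k] x) = (DN i x + k) % 2^i := by
  induction k with
  | zero => simp [Nat.mod_eq_of_lt (DN_lt i x)]
  | succ k ih =>
    rw [Function.iterate_succ_apply', DN_Tod, ih, Nat.mod_add_mod]
    ring_nf

lemma DN_TodInv_iterate (i k : ℕ) (x : ℕ → Bool) :
    DN i (TodInv^[k] x) = (DN i x + k * (2^i - 1)) % 2^i := by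
  induction k with
  | zero => simp [Nat.mod_eq_of_lt (DN_lt i x)]
  | succ k ih =>
    rw [Function.iterate_succ_apply', DN_TodInv, ih, Nat.mod_add_mod]
    ring_nf

lemma DN_zIter (i : ℕ) (n : ℤ) (x : ℕ → Bool) :
    (DN i (zIter n x) : ℤ) = ((DN i x : ℤ) + n) % 2^i := by
  unfold zIter
  split_ifs with h
  · rw [DN_Tod_iterate]
    push_cast
    rw [Int.toNat_of_nonneg h]
  · rw [DN_TodInv_iterate]
    have h1 := Nat.one_le_two_pow (n := i)
    have hm : (((-n).toNat : ℕ) : ℤ) = -n := Int.toNat_of_nonneg (by omega)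
    push_cast [Nat.cast_sub h1]
    rw [hm,
      show (DN i x : ℤ) + -n * ((2:ℤ)^i - 1) = ((DN i x : ℤ) + n) + (2:ℤ)^i * (-n) from by ring,
      Int.add_mul_emod_self_left]

lemma tod_iterate_image {i j : ℕ} (hj : j < 2^i) :
    Tod^[j] '' cyl0 i = {x | DN i x = j} := by
  ext x
  constructor
  · rintro ⟨x', hx', rfl⟩
    have h0 : DN i x' = 0 := DN_eq_zero_iff.mpr hx'
    simp [Set.mem_setOf_eq, DN_Tod_iterate, h0, Nat.mod_eq_of_lt hj]
  · intro hx
    refine ⟨TodInv^[j] x, ?_, ?_⟩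
    · apply DN_eq_zero_iff.mp
      rw [DN_TodInv_iterate, Set.mem_setOf_eq.mp hx]
      have hb : j ≤ j * 2^i := Nat.le_mul_of_pos_right j (by positivity)
      rw [show j + j * (2^i - 1) = j * 2^i from by rw [Nat.mul_sub, mul_one]; omega,
        Nat.mul_mod_left]
    · exact tod_leftInverse.iterate j x

lemma mem_Aset_iff (x : ℕ → Bool) : x ∈ Aset ↔ ∃ i, 5 ≤ i ∧ DN i x < i := by
  unfold Aset
  simp only [Set.mem_iUnion]
  constructor
  · rintro ⟨i, hi, j, hj, hx⟩
    rw [tod_iterate_image (hj.trans (Nat.lt_two_pow_self (n := i)))] at hx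
    exact ⟨i, hi, by rw [Set.mem_setOf_eq.mp hx]; exact hj⟩
  · rintro ⟨i, hi, hlt⟩
    exact ⟨i, hi, DN i x, hlt,
      by rw [tod_iterate_image (hlt.trans (Nat.lt_two_pow_self (n := i)))]; exact rfl⟩

lemma phi_eq_true_iff (x : ℕ → Bool) (n : ℤ) :
    Phi x n = true ↔ ∃ i, 5 ≤ i ∧ DN i (zIter n x) < i := by
  unfold Phi
  constructor
  · intro h
    exact (mem_Aset_iff _).mp (@of_decide_eq_true _ (Classical.propDecidable _) h)
  · intro h
    exact @decide_eq_true _ (Classical.propDecidable _) ((mem_Aset_iff _).mpr h)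

lemma continuous_of_depends {β : Type*} [TopologicalSpace β] [DiscreteTopology β]
    (f : (ℕ → Bool) → β) (N : ℕ)
    (hf : ∀ x x', (∀ j < N, x j = x' j) → f x = f x') : Continuous f := by
  have : f = (fun v : Fin N → Bool => f (fun j => if h : j < N then v ⟨j, h⟩ else false)) ∘
      (fun x (j : Fin N) => x j) := by
    funext x
    exact hf x _ (fun j hj => by simp [hj])
  rw [this]
  exact (continuous_of_discreteTopology).comp (continuous_pi fun j => continuous_apply _)

lemma continuous_DN (i : ℕ) : Continuous (DN i) := by
  apply continuous_of_depends _ i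
  intro x x' h
  exact Finset.sum_congr rfl (fun j hj => by rw [h j (Finset.mem_range.mp hj)])

lemma continuous_DNzIter (i : ℕ) (n : ℤ) : Continuous (fun x => DN i (zIter n x)) := by
  have he : (fun x => DN i (zIter n x)) =
      (fun m : ℕ => (((m : ℤ) + n) % 2^i).toNat) ∘ DN i := by
    funext x
    simpa using congrArg Int.toNat (DN_zIter i n x)
  rw [he]
  exact (continuous_of_discreteTopology).comp (continuous_DN i)

/-- if `y ∈ Y` has no right tail and no left tail of all `β`'s, then
`y ∈ Φ(X)`. -/
theorem stmt13 (y : ℤ → Bool) (hy : y ∈ Ysub)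
    (hfwd : ∀ i : ℤ, 0 < i → ¬ ∀ n ≥ i, y n = true)
    (hbwd : ∀ j : ℤ, j < 0 → ¬ ∀ n ≤ j, y n = true) :
    y ∈ Set.range Phi := by
  classical
  obtain ⟨f, hf, hf2⟩ := mem_closure_iff_seq_limit.mp hy
  choose g hg using hf
  obtain ⟨x, -, φ, hφ, hx⟩ :=
    IsCompact.tendsto_subseq (x := g) isCompact_univ (fun n => Set.mem_univ _)
  refine ⟨x, funext fun n => ?_⟩
  have hev : ∀ n : ℤ, ∀ᶠ m in atTop, f (φ m) n = y n := by
    intro n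
    have h1 : Tendsto (fun m => f m n) atTop (𝓝 (y n)) := tendsto_pi_nhds.mp hf2 n
    rw [nhds_discrete] at h1
    exact (hφ.tendsto_atTop).eventually (tendsto_pure.mp h1)
  by_cases hPhi : Phi x n = true
  · obtain ⟨i, hi5, hlt⟩ := (phi_eq_true_iff x n).mp hPhi
    have hopen : IsOpen {x' : ℕ → Bool | DN i (zIter n x') < i} :=
      (continuous_DNzIter i n).isOpen_preimage {m | m < i} (isOpen_discrete _)
    have hev2 : ∀ᶠ m in atTop, DN i (zIter n (g (φ m))) < i :=
      hx.eventually_mem (hopen.mem_nhds hlt)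
    obtain ⟨m, hm1, hm2⟩ := ((hev n).and hev2).exists
    have hβ : Phi (g (φ m)) n = true := (phi_eq_true_iff _ n).mpr ⟨i, hi5, hm2⟩
    rw [hg (φ m)] at hβ
    rw [hPhi, ← hm1, hβ]
  · have hPhiF : Phi x n = false := by revert hPhi; cases Phi x n <;> simp
    have hno : ∀ i, 5 ≤ i → ¬ DN i (zIter n x) < i := by
      intro i hi hc
      exact hPhi ((phi_eq_true_iff x n).mpr ⟨i, hi, hc⟩)
    rw [hPhiF]
    by_contra hyn
    have hyT : y n = true := by revert hyn; cases y n <;> simp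
    have key : ∀ N : ℕ,
        (∀ t : ℕ, t ≤ N → y (n + t) = true) ∨ (∀ t : ℕ, t ≤ N → y (n - t) = true) := by
      intro N
      have E1 : ∀ᶠ m in atTop, ∀ t ∈ Finset.range (N+1),
          f (φ m) (n + t) = y (n + t) ∧ f (φ m) (n - t) = y (n - t) := by
        rw [Filter.eventually_all_finset]
        intro t _
        exact (hev (n + t)).and (hev (n - t))
      have E2 : ∀ᶠ m in atTop, ∀ i ∈ Finset.Icc 5 (2*N+1),
          ¬ DN i (zIter n (g (φ m))) < i := by
        rw [Filter.eventually_all_finset]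
        intro i hi
        have hcl : IsClosed {x' : ℕ → Bool | DN i (zIter n x') < i} :=
          (isClosed_discrete {m | m < i}).preimage (continuous_DNzIter i n)
        exact hx.eventually_mem (hcl.isOpen_compl.mem_nhds (hno i (Finset.mem_Icc.mp hi).1))
      obtain ⟨m, hm1, hm2⟩ := (E1.and E2).exists
      have h0 := (hm1 0 (Finset.mem_range.mpr (Nat.succ_pos N))).1
      simp only [Nat.cast_zero, add_zero] at h0
      have hβ : Phi (g (φ m)) n = true := by rw [hg (φ m), h0, hyT]
      obtain ⟨i, hi5, hd⟩ := (phi_eq_true_iff _ n).mp hβ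
      set w := g (φ m) with hw
      set d := DN i (zIter n w) with hdd
      have hbig : 2*N + 2 ≤ i := by
        by_contra hc
        exact hm2 i (Finset.mem_Icc.mpr ⟨hi5, by omega⟩) hd
      have hdlt : d < 2^i := DN_lt _ _
      have hi2 : (i:ℤ) < (2:ℤ)^i := by exact_mod_cast Nat.lt_two_pow_self (n := i)
      have hshift : ∀ s : ℤ, (DN i (zIter s w) : ℤ) = ((d:ℤ) + (s - n)) % 2^i := by
        intro s
        have h1 := DN_zIter i n w
        rw [DN_zIter]
        calc ((DN i w : ℤ) + s) % 2^i
            = (((DN i w : ℤ) + n) + (s - n)) % 2^i := by congr 1; ring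
          _ = (((DN i w : ℤ) + n) % 2^i + (s - n)) % 2^i := (Int.emod_add_emod _ _ _).symm
          _ = ((d:ℤ) + (s - n)) % 2^i := by rw [← h1]
      rcases le_or_gt (d + N + 1) i with hcase | hcase
      · left
        intro t ht
        have e := (hm1 t (Finset.mem_range.mpr (by omega))).1
        rw [← e, ← hg (φ m)]
        apply (phi_eq_true_iff _ _).mpr
        refine ⟨i, hi5, ?_⟩
        have hv : (DN i (zIter (n + t) w) : ℤ) = (d:ℤ) + t := by
          rw [hshift (n + t), show (d:ℤ) + ((n + (t:ℤ)) - n) = (d:ℤ) + t from by ring]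
          exact Int.emod_eq_of_lt (by positivity) (by omega)
        rw [← hw]
        omega
      · right
        intro t ht
        have e := (hm1 t (Finset.mem_range.mpr (by omega))).2
        rw [← e, ← hg (φ m)]
        apply (phi_eq_true_iff _ _).mpr
        refine ⟨i, hi5, ?_⟩
        have htd : (t:ℤ) < (d:ℤ) := by omega
        have hv : (DN i (zIter (n - t) w) : ℤ) = (d:ℤ) - t := by
          rw [hshift (n - t), show (d:ℤ) + ((n - (t:ℤ)) - n) = (d:ℤ) - t from by ring]
          exact Int.emod_eq_of_lt (by omega) (by omega)
        rw [← hw]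
        omega
    have dich : (∀ t : ℕ, y (n + t) = true) ∨ (∀ t : ℕ, y (n - t) = true) := by
      by_cases hR : ∀ t : ℕ, y (n + t) = true
      · exact Or.inl hR
      · push_neg at hR
        obtain ⟨t0, ht0⟩ := hR
        right
        intro t
        rcases key (max t t0) with h | h
        · exact absurd (h t0 (le_max_right _ _)) ht0
        · exact h t (le_max_left _ _)
    rcases dich with h | h
    · refine hfwd (max n 1) (lt_of_lt_of_le one_pos (le_max_right n 1)) ?_
      intro k hk
      have hkn : n ≤ k := le_trans (le_max_left n 1) hk
      have : n + (((k - n).toNat : ℕ) : ℤ) = k := by omega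
      rw [← this]
      exact h _
    · refine hbwd (min n (-1)) (lt_of_le_of_lt (min_le_right n (-1)) (by norm_num)) ?_
      intro k hk
      have hkn : k ≤ n := le_trans hk (min_le_left n (-1))
      have : n - (((n - k).toNat : ℕ) : ℤ) = k := by omega
      rw [← this]
      exact h _
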